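/- Let P₁, Q₁, P₂, Q₂ ∈ ℂ[X] be polynomials. Then |P₁(z)|² + |Q₁(z)|² = |P₂(z)|² + |Q₂(z)|² for all z ∈ ℂ if and only if there exists a constant unitary matrix Λ ∈ U(2) (a 2×2 complex matrix with Λ*Λ = I) such that P₂ = Λ₁₁·P₁ + Λ₁₂·Q₁ and Q₂ = Λ₂₁·P₁ + Λ₂₂·Q₁. -/

import Mathlib

open Polynomial Complex Finsupp

noncomputable abbrev pev (z w : ℂ) : Polynomial (Polynomial ℂ) →+* ℂ :=
  eval₂RingHom (evalRingHom z) w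

lemma real_vanish (G : Polynomial (Polynomial ℂ))
    (h : ∀ x y : ℝ, pev x y G = 0) : G = 0 := by
  have key : ∀ x : ℝ, G.map (evalRingHom (x : ℂ)) = 0 := by
    intro x
    apply Polynomial.eq_zero_of_infinite_isRoot
    apply Set.infinite_of_injective_forall_mem (f := fun y : ℝ => (y : ℂ))
      Complex.ofReal_injective
    intro y
    simp only [Set.mem_setOf_eq, IsRoot, eval_map]
    exact h x y
  ext n k
  have hx : ∀ x : ℝ, (G.coeff n).eval (x : ℂ) = 0 := by
    intro x
    have := congrArg (fun p => Polynomial.coeff p n) (key x)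
    simpa [coeff_map] using this
  have : G.coeff n = 0 := by
    apply Polynomial.eq_zero_of_infinite_isRoot
    exact Set.infinite_of_injective_forall_mem (f := fun x : ℝ => (x : ℂ))
      Complex.ofReal_injective hx
  simp [this]

/-- vanishing at all (z, conj z) implies vanishing as a bivariate polynomial -/
lemma conj_diag_vanish (F : Polynomial (Polynomial ℂ))
    (h : ∀ z : ℂ, pev z (starRingEnd ℂ z) F = 0) : F = 0 := by
  classical
  set u : Polynomial (Polynomial ℂ) := C X + C (C Complex.I) * X with hu
  set v : Polynomial (Polynomial ℂ) := C X - C (C Complex.I) * X with hv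
  set φ : Polynomial ℂ →+* Polynomial (Polynomial ℂ) :=
    eval₂RingHom ((C : Polynomial ℂ →+* _).comp (C : ℂ →+* Polynomial ℂ)) u with hφ
  set σF : Polynomial (Polynomial ℂ) := eval₂ φ v F with hσ
  have hcomp : ∀ x y : ℂ, pev x y σF = pev (x + Complex.I * y) (x - Complex.I * y) F := by
    intro x y
    rw [hσ, hom_eval₂]
    have h1 : (pev x y) v = x - Complex.I * y := by
      simp [hv, pev, coe_eval₂RingHom, eval₂_sub, eval₂_C, eval₂_mul, eval₂_X]
    have h2 : (pev x y).comp φ = evalRingHom (x + Complex.I * y) := by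
      apply Polynomial.ringHom_ext
      · intro a
        simp [hφ, pev, coe_eval₂RingHom, eval₂_C]
      · simp [hφ, hu, pev, coe_eval₂RingHom, eval₂_C, eval₂_add, eval₂_mul, eval₂_X]
    rw [h1, h2]
    rfl
  have hσF0 : σF = 0 := by
    apply real_vanish
    intro x y
    rw [hcomp]
    have : ((x : ℂ) - Complex.I * y) = starRingEnd ℂ ((x : ℂ) + Complex.I * y) := by
      simp [map_add, map_mul, Complex.conj_ofReal, Complex.conj_I]
      ring
    rw [this]
    exact h _
  apply real_vanish
  intro x y
  have := hcomp ((x + y) / 2) ((x - y) / (2 * Complex.I))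
  rw [hσF0, map_zero] at this
  have e1 : ((x:ℂ) + y) / 2 + Complex.I * (((x:ℂ) - y) / (2 * Complex.I)) = x := by
    field_simp; ring
  have e2 : ((x:ℂ) + y) / 2 - Complex.I * (((x:ℂ) - y) / (2 * Complex.I)) = y := by
    field_simp; ring
  rw [e1, e2] at this
  exact this.symm

open scoped InnerProductSpace in
lemma gram_unitary (s t : ℕ → EuclideanSpace ℂ (Fin 2))
    (h : ∀ j k, ⟪s j, s k⟫_ℂ = ⟪t j, t k⟫_ℂ) :
    ∃ U : EuclideanSpace ℂ (Fin 2) ≃ₗᵢ[ℂ] EuclideanSpace ℂ (Fin 2), ∀ k, U (s k) = t k := by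
  classical
  set f := Finsupp.linearCombination ℂ s with hf
  set g := Finsupp.linearCombination ℂ t with hg
  have hinner : ∀ u v : ℕ →₀ ℂ, ⟪f u, f v⟫_ℂ = ⟪g u, g v⟫_ℂ := by
    intro u v
    rw [hf, hg]
    rw [Finsupp.linearCombination_apply, Finsupp.linearCombination_apply,
      Finsupp.linearCombination_apply, Finsupp.linearCombination_apply,
      Finsupp.sum, Finsupp.sum, Finsupp.sum, Finsupp.sum,
      sum_inner, sum_inner]
    refine Finset.sum_congr rfl fun j _ => ?_
    rw [inner_sum, inner_sum]
    refine Finset.sum_congr rfl fun k _ => ?_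
    rw [inner_smul_left, inner_smul_left, inner_smul_right, inner_smul_right, h]
  have hnorm : ∀ u, ‖f u‖ = ‖g u‖ := by
    intro u
    rw [@norm_eq_sqrt_re_inner ℂ, @norm_eq_sqrt_re_inner ℂ, hinner]
  have hker : LinearMap.ker f ≤ LinearMap.ker g := by
    intro u hu
    simp only [LinearMap.mem_ker] at hu ⊢
    have := hnorm u
    rw [hu, norm_zero] at this
    exact norm_eq_zero.mp this.symm
  set S := LinearMap.range f with hS
  let e : ((ℕ →₀ ℂ) ⧸ LinearMap.ker f) ≃ₗ[ℂ] S := f.quotKerEquivRange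
  let L : S →ₗ[ℂ] EuclideanSpace ℂ (Fin 2) :=
    (LinearMap.ker f).liftQ g hker ∘ₗ (e.symm : S →ₗ[ℂ] _)
  have hL : ∀ u : ℕ →₀ ℂ, L ⟨f u, LinearMap.mem_range_self f u⟩ = g u := by
    intro u
    have he : e (Submodule.Quotient.mk u) = ⟨f u, LinearMap.mem_range_self f u⟩ :=
      Subtype.ext (f.quotKerEquivRange_apply_mk u)
    simp only [L, LinearMap.comp_apply, LinearEquiv.coe_coe]
    rw [show (e.symm ⟨f u, LinearMap.mem_range_self f u⟩ : _) = Submodule.Quotient.mk u by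
      rw [← he, LinearEquiv.symm_apply_apply]]
    exact Submodule.liftQ_apply _ _ _
  have hLnorm : ∀ x : S, ‖L x‖ = ‖x‖ := by
    rintro ⟨x, hx⟩
    obtain ⟨u, rfl⟩ := hx
    rw [hL u]
    exact (hnorm u).symm
  let LI : S →ₗᵢ[ℂ] EuclideanSpace ℂ (Fin 2) := ⟨L, hLnorm⟩
  let U' := LI.extend
  refine ⟨U'.toLinearIsometryEquiv rfl, fun k => ?_⟩
  have h1 : s k = f (Finsupp.single k 1) := by
    rw [hf, Finsupp.linearCombination_single, one_smul]
  have h2 : t k = g (Finsupp.single k 1) := by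
    rw [hg, Finsupp.linearCombination_single, one_smul]
  show U' (s k) = t k
  rw [h1, h2]
  have := LI.extend_apply ⟨f (Finsupp.single k 1), LinearMap.mem_range_self f _⟩
  rw [this]
  exact hL _

open scoped InnerProductSpace

/-- |P₁|² + |Q₁|² = |P₂|² + |Q₂|² pointwise on ℂ iff
(P₂,Q₂) = Λ(P₁,Q₁) for some constant unitary matrix Λ ∈ U(2). -/
theorem stmt3 (P₁ Q₁ P₂ Q₂ : Polynomial ℂ) :
    (∀ z : ℂ, ‖P₁.eval z‖ ^ 2 + ‖Q₁.eval z‖ ^ 2 =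
      ‖P₂.eval z‖ ^ 2 + ‖Q₂.eval z‖ ^ 2) ↔
    ∃ Λ : Matrix (Fin 2) (Fin 2) ℂ, Λ ∈ Matrix.unitaryGroup (Fin 2) ℂ ∧
      P₂ = Polynomial.C (Λ 0 0) * P₁ + Polynomial.C (Λ 0 1) * Q₁ ∧
      Q₂ = Polynomial.C (Λ 1 0) * P₁ + Polynomial.C (Λ 1 1) * Q₁ := by
  classical
  have habs : ∀ x : ℂ, ((‖x‖ ^ 2 : ℝ) : ℂ) = x * (starRingEnd ℂ) x := by
    intro x; rw [Complex.sq_norm, Complex.mul_conj]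
  constructor
  · intro h
    -- complex form of the hypothesis
    have hc : ∀ z : ℂ,
        P₁.eval z * (starRingEnd ℂ) (P₁.eval z) + Q₁.eval z * (starRingEnd ℂ) (Q₁.eval z) =
        P₂.eval z * (starRingEnd ℂ) (P₂.eval z) + Q₂.eval z * (starRingEnd ℂ) (Q₂.eval z) := by
      intro z
      rw [← habs, ← habs, ← habs, ← habs, ← Complex.ofReal_add, ← Complex.ofReal_add, h z]
    -- the bivariate kernel polynomial
    set cP : Polynomial ℂ → Polynomial (Polynomial ℂ) :=
      fun P => (P.map (starRingEnd ℂ)).map (C : ℂ →+* Polynomial ℂ) with hcP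
    set F : Polynomial (Polynomial ℂ) :=
      C P₁ * cP P₁ + C Q₁ * cP Q₁ - C P₂ * cP P₂ - C Q₂ * cP Q₂ with hF
    have hevC : ∀ z w : ℂ, ∀ P : Polynomial ℂ, pev z w (C P) = P.eval z := by
      intro z w P; simp [pev, coe_eval₂RingHom, eval₂_C]
    have hevcP : ∀ z w : ℂ, ∀ P : Polynomial ℂ, pev z w (cP P) = eval₂ (starRingEnd ℂ) w P := by
      intro z w P
      simp only [hcP, pev, coe_eval₂RingHom, eval₂_map]
      congr 1
      apply RingHom.ext; intro a
      simp
    have hF0 : F = 0 := by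
      apply conj_diag_vanish
      intro z
      have : ∀ P : Polynomial ℂ,
          pev z (starRingEnd ℂ z) (cP P) = (starRingEnd ℂ) (P.eval z) := by
        intro P
        rw [hevcP]
        exact eval₂_hom (starRingEnd ℂ) z
      simp only [hF, map_sub, map_add, map_mul, hevC, this]
      have := hc z
      ring_nf
      ring_nf at this
      linear_combination this
    -- coefficientwise identity
    have hid : ∀ k : ℕ,
        P₁ * C ((starRingEnd ℂ) (P₁.coeff k)) + Q₁ * C ((starRingEnd ℂ) (Q₁.coeff k)) =
        P₂ * C ((starRingEnd ℂ) (P₂.coeff k)) + Q₂ * C ((starRingEnd ℂ) (Q₂.coeff k)) := by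
      intro k
      have := congrArg (fun G => Polynomial.coeff G k) hF0
      simp only [hF, coeff_sub, coeff_add, coeff_C_mul, hcP, coeff_map, coeff_zero] at this
      rw [sub_sub, sub_eq_zero] at this
      simpa [mul_comm] using this
    -- Gram equality of coefficient pairs
    set e0 : EuclideanSpace ℂ (Fin 2) := EuclideanSpace.single 0 1 with he0
    set e1 : EuclideanSpace ℂ (Fin 2) := EuclideanSpace.single 1 1 with he1
    set s : ℕ → EuclideanSpace ℂ (Fin 2) := fun k => P₁.coeff k • e0 + Q₁.coeff k • e1 with hs
    set t : ℕ → EuclideanSpace ℂ (Fin 2) := fun k => P₂.coeff k • e0 + Q₂.coeff k • e1 with ht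
    have hinner : ∀ (a b c d : ℂ),
        ⟪a • e0 + b • e1, c • e0 + d • e1⟫_ℂ = (starRingEnd ℂ) a * c + (starRingEnd ℂ) b * d := by
      intro a b c d
      simp [he0, he1, inner_add_left, inner_add_right, inner_smul_left, inner_smul_right,
        EuclideanSpace.inner_single_left, EuclideanSpace.single_apply]
      ring
    have hgram : ∀ j k, ⟪s j, s k⟫_ℂ = ⟪t j, t k⟫_ℂ := by
      intro j k
      have := congrArg (fun G => Polynomial.coeff G k) (hid j)
      simp only [coeff_add, coeff_mul_C] at this
      rw [hs, ht, hinner, hinner]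
      linear_combination this
    obtain ⟨U, hU⟩ := gram_unitary s t hgram
    set Λ : Matrix (Fin 2) (Fin 2) ℂ :=
      fun i j => U (EuclideanSpace.single j 1) i with hΛ
    have hUapply : ∀ k : ℕ, ∀ i : Fin 2,
        (P₂.coeff k • e0 + Q₂.coeff k • e1) i
          = P₁.coeff k * Λ i 0 + Q₁.coeff k * Λ i 1 := by
      intro k i
      have := hU k
      rw [hs, ht] at this
      have := congrArg (fun v : EuclideanSpace ℂ (Fin 2) => v i) this.symm
      simpa [map_add, map_smul, hΛ, he0, he1] using this
    have hcoeff : ∀ k : ℕ,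
        P₂.coeff k = Λ 0 0 * P₁.coeff k + Λ 0 1 * Q₁.coeff k ∧
        Q₂.coeff k = Λ 1 0 * P₁.coeff k + Λ 1 1 * Q₁.coeff k := by
      intro k
      constructor
      · have := hUapply k 0
        simpa [he0, he1, EuclideanSpace.single_apply, mul_comm] using this
      · have := hUapply k 1
        simpa [he0, he1, EuclideanSpace.single_apply, mul_comm] using this
    refine ⟨Λ, ?_, ?_, ?_⟩
    · rw [Matrix.mem_unitaryGroup_iff']
      ext j k
      have : ⟪U (EuclideanSpace.single j 1), U (EuclideanSpace.single k 1)⟫_ℂ =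
          ⟪(EuclideanSpace.single j (1:ℂ) : EuclideanSpace ℂ (Fin 2)),
            EuclideanSpace.single k 1⟫_ℂ := U.inner_map_map _ _
      simp only [EuclideanSpace.inner_single_left, EuclideanSpace.single_apply, map_one,
        one_mul] at this
      rw [Matrix.mul_apply]
      simp only [Matrix.star_apply, Matrix.one_apply]
      simp only [hΛ]
      rw [Fin.sum_univ_two]
      rw [PiLp.inner_apply] at this
      simp only [RCLike.inner_apply, Fin.sum_univ_two] at this
      simpa [eq_comm, mul_comm] using this
    · ext k
      simp only [coeff_add, coeff_C_mul]
      exact (hcoeff k).1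
    · ext k
      simp only [coeff_add, coeff_C_mul]
      exact (hcoeff k).2
  · rintro ⟨Λ, hΛ, hP, hQ⟩
    rw [Matrix.mem_unitaryGroup_iff'] at hΛ
    have hent : ∀ i j, (star Λ * Λ) i j = (1 : Matrix (Fin 2) (Fin 2) ℂ) i j := by
      rw [hΛ]; intro i j; rfl
    have h00 := hent 0 0
    have h01 := hent 0 1
    have h10 := hent 1 0
    have h11 := hent 1 1
    simp only [Matrix.mul_apply, Matrix.star_apply, Fin.sum_univ_two, Matrix.one_apply,
      if_true, if_false, Fin.zero_eta, Fin.mk_one, ne_eq, zero_ne_one, one_ne_zero,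
      RCLike.star_def] at h00 h01 h10 h11
    intro z
    apply Complex.ofReal_injective
    rw [Complex.ofReal_add, Complex.ofReal_add, habs, habs, habs, habs, hP, hQ]
    simp only [eval_add, eval_mul, eval_C, map_add, map_mul]
    set a := P₁.eval z
    set b := Q₁.eval z
    linear_combination (a * (starRingEnd ℂ) a) * h00.symm + ((starRingEnd ℂ) a * b) * h01.symm
      + (a * (starRingEnd ℂ) b) * h10.symm + (b * (starRingEnd ℂ) b) * h11.symm
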